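/- Let $3 \le d \le k$, $n \ge 2k$, and suppose $\mathcal{F} \subseteq \binom{[n]}{k}$ contains the full star centered at $x_0$ (i.e., every $k$-set containing $x_0$ is in $\mathcal{F}$) and contains some set $B' \in \mathcal{F}$ with $x_0 \notin B'$. Then every element of $\mathcal{F}$ is contained in some $d$-cluster in $\mathcal{F}$. -/

import Mathlib

/-- A `d`-cluster of `k`-sets: `d` distinct sets with empty common intersection
and union of size at most `2k`. -/
def IsCluster (k d : ℕ) (C : Finset (Finset ℕ)) : Prop :=
  C.card = d ∧ (C.sup id).card ≤ 2 * k ∧ ∀ y : ℕ, ∃ B ∈ C, y ∉ B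

lemma cluster_aux (n k d : ℕ) (hd : 3 ≤ d) (hdk : d ≤ k) (hkn : 2 * k ≤ n)
    (F : Finset (Finset ℕ)) (x₀ : ℕ) (hx₀ : x₀ ∈ Finset.Icc 1 n)
    (hstar : ∀ B ∈ (Finset.Icc 1 n).powersetCard k, x₀ ∈ B → B ∈ F)
    (P Z : Finset ℕ) (hPF : P ∈ F) (hZF : Z ∈ F)
    (hPsub : P ⊆ Finset.Icc 1 n) (hZsub : Z ⊆ Finset.Icc 1 n)
    (hPcard : P.card = k) (hZcard : Z.card = k)
    (hxP : x₀ ∈ P) (hxZ : x₀ ∉ Z) :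
    ∃ C ⊆ F, P ∈ C ∧ Z ∈ C ∧ IsCluster k d C := by
  have hk3 : 3 ≤ k := hd.trans hdk
  -- find U of size 2k containing P ∪ Z
  have hVsub : P ∪ Z ⊆ Finset.Icc 1 n := Finset.union_subset hPsub hZsub
  have hVcard : (P ∪ Z).card ≤ 2 * k := by
    calc (P ∪ Z).card ≤ P.card + Z.card := Finset.card_union_le _ _
    _ = 2 * k := by omega
  have hIcard : (Finset.Icc 1 n).card = n := by simp
  obtain ⟨U, hVU, hUsub, hUcard⟩ :=
    Finset.exists_subsuperset_card_eq hVsub hVcard (by omega)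
  have hPU : P ⊆ U := (Finset.subset_union_left).trans hVU
  have hZU : Z ⊆ U := (Finset.subset_union_right).trans hVU
  set W : Finset ℕ := U \ P with hW
  have hWcard : W.card = k := by
    rw [hW, Finset.card_sdiff_of_subset hPU, hUcard, hPcard]; omega
  have hxW : x₀ ∉ W := by simp [hW, hxP]
  have hWP : ∀ y ∈ W, y ∉ P := by intro y hy; exact (Finset.mem_sdiff.mp hy).2
  have hWU : W ⊆ U := Finset.sdiff_subset
  obtain ⟨S, hSW, hScard⟩ := Finset.exists_subset_card_eq (show d - 2 ≤ W.card by omega)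
  set Q : ℕ → Finset ℕ := fun w => insert x₀ (W.erase w) with hQ
  have hQcard : ∀ w ∈ S, (Q w).card = k := by
    intro w hw
    rw [hQ]
    rw [Finset.card_insert_of_notMem (fun h => hxW (Finset.mem_of_mem_erase h)),
      Finset.card_erase_of_mem (hSW hw), hWcard]
    omega
  have hQsub : ∀ w, Q w ⊆ U := by
    intro w
    exact Finset.insert_subset (hPU hxP) ((Finset.erase_subset _ _).trans hWU)
  have hxQ : ∀ w, x₀ ∈ Q w := fun w => Finset.mem_insert_self _ _
  have hQF : ∀ w ∈ S, Q w ∈ F := by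
    intro w hw
    exact hstar _ (Finset.mem_powersetCard.mpr ⟨(hQsub w).trans hUsub, hQcard w hw⟩) (hxQ w)
  have hQP : ∀ w ∈ S, Q w ≠ P := by
    intro w hw h
    have h1 : (W.erase w).Nonempty := by
      rw [← Finset.card_pos, Finset.card_erase_of_mem (hSW hw), hWcard]; omega
    obtain ⟨y, hy⟩ := h1
    have hyW : y ∈ W := Finset.mem_of_mem_erase hy
    have : y ∈ P := h ▸ Finset.mem_insert_of_mem hy
    exact hWP y hyW this
  have hQinj : Set.InjOn Q S := by
    intro a ha b hb hab
    by_contra hne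
    have hbQ : b ∈ Q a := Finset.mem_insert_of_mem (Finset.mem_erase.mpr ⟨Ne.symm hne, hSW hb⟩)
    rw [hab] at hbQ
    rcases Finset.mem_insert.mp hbQ with h | h
    · exact hxW (h ▸ hSW hb)
    · exact (Finset.mem_erase.mp h).1 rfl
  -- the cluster
  refine ⟨insert Z (insert P (S.image Q)), ?_, ?_, Finset.mem_insert_self _ _, ?_, ?_, ?_⟩
  · intro A hA
    rcases Finset.mem_insert.mp hA with rfl | hA
    · exact hZF
    rcases Finset.mem_insert.mp hA with rfl | hA
    · exact hPF
    obtain ⟨w, hw, rfl⟩ := Finset.mem_image.mp hA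
    exact hQF w hw
  · exact Finset.mem_insert_of_mem (Finset.mem_insert_self _ _)
  · -- card
    have himg : (S.image Q).card = d - 2 := by
      rw [Finset.card_image_of_injOn hQinj, hScard]
    have hPimg : P ∉ S.image Q := by
      intro h
      obtain ⟨w, hw, hweq⟩ := Finset.mem_image.mp h
      exact hQP w hw hweq
    have hZins : Z ∉ insert P (S.image Q) := by
      intro h
      rcases Finset.mem_insert.mp h with rfl | h
      · exact hxZ hxP
      obtain ⟨w, hw, rfl⟩ := Finset.mem_image.mp h
      exact hxZ (hxQ w)
    rw [Finset.card_insert_of_notMem hZins, Finset.card_insert_of_notMem hPimg, himg]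
    omega
  · -- union size
    have : (insert Z (insert P (S.image Q))).sup id ⊆ U := by
      intro y hy
      simp only [Finset.mem_sup, id] at hy
      obtain ⟨A, hA, hyA⟩ := hy
      rcases Finset.mem_insert.mp hA with rfl | hA
      · exact hZU hyA
      rcases Finset.mem_insert.mp hA with rfl | hA
      · exact hPU hyA
      obtain ⟨w, hw, rfl⟩ := Finset.mem_image.mp hA
      exact hQsub w hyA
    calc ((insert Z (insert P (S.image Q))).sup id).card ≤ U.card :=
          Finset.card_le_card this
      _ = 2 * k := hUcard
  · -- coverage
    intro y
    by_cases hyx : y = x₀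
    · exact ⟨Z, Finset.mem_insert_self _ _, hyx ▸ hxZ⟩
    by_cases hyP : y ∈ P
    · have hSne : S.Nonempty := by rw [← Finset.card_pos, hScard]; omega
      obtain ⟨w, hw⟩ := hSne
      refine ⟨Q w, Finset.mem_insert_of_mem (Finset.mem_insert_of_mem
        (Finset.mem_image_of_mem Q hw)), ?_⟩
      intro h
      rcases Finset.mem_insert.mp h with h | h
      · exact hyx h
      · exact hWP y (Finset.mem_of_mem_erase h) hyP
    · exact ⟨P, Finset.mem_insert_of_mem (Finset.mem_insert_self _ _), hyP⟩

theorem stmt_18 (n k d : ℕ) (hd : 3 ≤ d) (hdk : d ≤ k) (hkn : 2 * k ≤ n)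
    (F : Finset (Finset ℕ)) (hF : F ⊆ (Finset.Icc 1 n).powersetCard k)
    (x₀ : ℕ) (hx₀ : x₀ ∈ Finset.Icc 1 n)
    (hstar : ∀ B ∈ (Finset.Icc 1 n).powersetCard k, x₀ ∈ B → B ∈ F)
    (B' : Finset ℕ) (hB' : B' ∈ F) (hxB' : x₀ ∉ B') :
    ∀ B ∈ F, ∃ C ⊆ F, B ∈ C ∧ IsCluster k d C := by
  intro B hB
  have hk3 : 3 ≤ k := hd.trans hdk
  obtain ⟨hBsub, hBcard⟩ := Finset.mem_powersetCard.mp (hF hB)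
  obtain ⟨hB'sub, hB'card⟩ := Finset.mem_powersetCard.mp (hF hB')
  by_cases hx : x₀ ∈ B
  · obtain ⟨C, hCF, hPC, hZC, hC⟩ := cluster_aux n k d hd hdk hkn F x₀ hx₀ hstar
      B B' hB hB' hBsub hB'sub hBcard hB'card hx hxB'
    exact ⟨C, hCF, hPC, hC⟩
  · -- build a star set P from B
    have hBne : B.Nonempty := by rw [← Finset.card_pos, hBcard]; omega
    obtain ⟨b, hb⟩ := hBne
    set P : Finset ℕ := insert x₀ (B.erase b) with hP
    have hxeB : x₀ ∉ B.erase b := fun h => hx (Finset.mem_of_mem_erase h)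
    have hPcard : P.card = k := by
      rw [hP, Finset.card_insert_of_notMem hxeB, Finset.card_erase_of_mem hb, hBcard]
      omega
    have hPsub : P ⊆ Finset.Icc 1 n :=
      Finset.insert_subset hx₀ ((Finset.erase_subset _ _).trans hBsub)
    have hPF : P ∈ F :=
      hstar _ (Finset.mem_powersetCard.mpr ⟨hPsub, hPcard⟩) (Finset.mem_insert_self _ _)
    obtain ⟨C, hCF, hPC, hZC, hC⟩ := cluster_aux n k d hd hdk hkn F x₀ hx₀ hstar
      P B hPF hB hPsub hBsub hPcard hBcard (Finset.mem_insert_self _ _) hx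
    exact ⟨C, hCF, hZC, hC⟩
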